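/- Suppose for a covering LP min{⟨1,y⟩ : Aᵀy ≥ 1, y ≥ 0} with nonnegative matrix A, at termination there is an index i with (Ax)_i = ‖Ax‖_∞ ≥ ln(m)/ε, and the bounds m·exp((1+ε)·⟨1,x⟩/min_t(⟨1,w^(t)⟩/λ^(t))) ≥ ⟨1,w^(T)⟩ ≥ w_i^(T) ≥ exp((1−ε)(Ax)_i) hold, where each w^(t)/λ^(t) is feasible for the covering LP and x/(Ax)_i is feasible for the packing LP. Then ⟨1,x⟩/(Ax)_i ≥ ((1−2ε)/(1+ε)) · min_t ⟨1,w^(t)⟩/λ^(t); in particular the returned packing and covering solutions are within factor (1+O(ε)) of each other and hence both (1+O(ε))-optimal. -/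

import Mathlib

/-- Correctness of the MWU algorithm: at termination, if `(Ax)_{i₀} = ‖Ax‖_∞ ≥ ln(m)/ε`
and the chain of bounds
`m·exp((1+ε)⟨1,x⟩ / min_{t ≤ T}(⟨1,w^(t)⟩/λ^(t))) ≥ ⟨1,w^(T)⟩ ≥ w_{i₀}^(T) ≥ exp((1-ε)(Ax)_{i₀})`
holds, where each `w^(t)/λ^(t)` is feasible for the covering LP and `x/(Ax)_{i₀}` is feasible
for the packing LP, then `⟨1,x⟩/(Ax)_{i₀} ≥ ((1-2ε)/(1+ε)) · min_{t ≤ T} ⟨1,w^(t)⟩/λ^(t)`. -/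
theorem mwu_correctness (m N : ℕ) (hm : 2 ≤ m) (ε : ℝ) (hε : 0 < ε)
    (A : Matrix (Fin m) (Fin N) ℝ) (hA : ∀ i j, 0 ≤ A i j)
    (x : Fin N → ℝ) (hx : ∀ j, 0 ≤ x j)
    (w : ℕ → Fin m → ℝ) (hwpos : ∀ t i, 0 < w t i)
    (lam : ℕ → ℝ) (hlam : ∀ t, 0 < lam t)
    (T : ℕ) (i₀ : Fin m)
    (himax : ∀ i, A.mulVec x i ≤ A.mulVec x i₀)
    (hieta : Real.log m / ε ≤ A.mulVec x i₀)
    (hcov : ∀ t, t ≤ T → ∀ j, 1 ≤ ∑ i, A i j * (w t i / lam t))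
    (hub : ∑ i, w T i ≤
      m * Real.exp ((1 + ε) * (∑ j, x j) /
        ((Finset.range (T + 1)).inf' Finset.nonempty_range_add_one
          fun t => (∑ i, w t i) / lam t)))
    (hmid : w T i₀ ≤ ∑ i, w T i)
    (hlb : Real.exp ((1 - ε) * A.mulVec x i₀) ≤ w T i₀) :
    ((1 - 2 * ε) / (1 + ε)) *
        ((Finset.range (T + 1)).inf' Finset.nonempty_range_add_one
          fun t => (∑ i, w t i) / lam t) ≤
      (∑ j, x j) / A.mulVec x i₀ := by
  set D := (Finset.range (T + 1)).inf' Finset.nonempty_range_add_one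
      fun t => (∑ i, w t i) / lam t with hDdef
  have hmpos : (1:ℝ) < m := by exact_mod_cast Nat.lt_of_lt_of_le one_lt_two hm
  have hlogm : 0 < Real.log m := Real.log_pos hmpos
  have hα : 0 < A.mulVec x i₀ := lt_of_lt_of_le (div_pos hlogm hε) hieta
  have hS : 0 ≤ ∑ j, x j := Finset.sum_nonneg fun j _ => hx j
  have hD : 0 < D := by
    rw [hDdef, Finset.lt_inf'_iff]
    intro t _
    have : Nonempty (Fin m) := ⟨⟨0, by omega⟩⟩
    exact div_pos (Finset.sum_pos (fun i _ => hwpos t i) Finset.univ_nonempty) (hlam t)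
  have hchain : Real.exp ((1 - ε) * A.mulVec x i₀) ≤
      m * Real.exp ((1 + ε) * (∑ j, x j) / D) :=
    le_trans hlb (le_trans hmid hub)
  have hlog : (1 - ε) * A.mulVec x i₀ ≤ Real.log m + (1 + ε) * (∑ j, x j) / D := by
    have := Real.log_le_log (Real.exp_pos _) hchain
    rwa [Real.log_exp, Real.log_mul (by positivity) (Real.exp_ne_zero _),
      Real.log_exp] at this
  have hlm : Real.log m ≤ ε * A.mulVec x i₀ := by
    rw [div_le_iff₀ hε] at hieta; linarith [hieta]
  have hkey : (1 - 2 * ε) * A.mulVec x i₀ ≤ (1 + ε) * (∑ j, x j) / D := by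
    linarith
  rcases le_or_gt (1 - 2 * ε) 0 with h | h
  · have : (1 - 2 * ε) / (1 + ε) * D ≤ 0 := by
      apply mul_nonpos_of_nonpos_of_nonneg _ hD.le
      exact div_nonpos_of_nonpos_of_nonneg h (by linarith)
    exact le_trans this (div_nonneg hS hα.le)
  · rw [div_mul_eq_mul_div, div_le_div_iff₀ (by linarith) hα]
    rw [le_div_iff₀ hD] at hkey
    nlinarith [hkey, hD, hα]
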